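/- The binary relation Ē_a = {(ξ̄, a(ξ)‾) : ξ cofinal with (01)^∞} on X* is regular; that is, its convolution ⊗Ē_a = {⊗(ξ̄, a(ξ)‾) : ξ cofinal with (01)^∞} is a regular language over (X_⋄)². -/

import Mathlib

/-!
STATEMENT 7: The binary relation Ē_a = {(ξ̄, a(ξ)‾) : ξ cofinal with (01)^∞} on X* is regular:
its convolution ⊗Ē_a is a regular language over (X_⋄)².
-/

/-- The infinite word `(01)^∞`: its letter at (0-indexed) position `n` is `1` iff `n` is odd. -/
def base01 : ℕ → Bool := fun n => decide (n % 2 = 1)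

/-- The map `a` on infinite binary sequences: `a(0s) = 1s`, `a(1s) = 0·a(s)`. -/
def aMap (ξ : ℕ → Bool) : ℕ → Bool :=
  fun n => if ∀ k < n, ξ k = true then !ξ n else ξ n

/-- Two infinite sequences are cofinal if they agree from some position on. -/
def Cofinal (ξ η : ℕ → Bool) : Prop := ∃ N : ℕ, ∀ n, N ≤ n → ξ n = η n

/-- The encoding `ξ̄` of a sequence `ξ` cofinal with `(01)^∞`: the prefix of `ξ` of length `l`,
where `l` is the largest position (1-indexed) at which `ξ` differs from `(01)^∞`; equivalently
the least `m` such that `ξ` agrees with `(01)^∞` from (0-indexed) position `m` on. -/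
noncomputable def encode (ξ : ℕ → Bool) : List Bool :=
  List.ofFn (fun i : Fin (sInf {m : ℕ | ∀ n, m ≤ n → ξ n = base01 n}) => ξ i)

/-- The convolution `⊗(u,v)` of two words over `X`, a word over the alphabet
`(X_⋄)² = (Option X)²`, with `none` playing the role of the padding symbol `⋄`. -/
def conv {α : Type*} (u v : List α) : List (Option α × Option α) :=
  List.ofFn (fun i : Fin (max u.length v.length) => (u[(i : ℕ)]?, v[(i : ℕ)]?))


abbrev Lt := Option Bool × Option Bool

def a10 : Lt := (some true, some false)
def a01 : Lt := (some false, some true)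
def aN1 : Lt := (none, some true)
def aN0 : Lt := (none, some false)
def a1N : Lt := (some true, none)
def a0N : Lt := (some false, none)
def dg (b : Bool) : Lt := (some b, some b)

inductive St
  | S | E | O | F1 | F2 | AC | DE
  | D (p : Bool) (l : Option Bool)
  deriving DecidableEq, Fintype

open St

def stp : St → Lt → St
  | .S, (none, some true) => .AC
  | .S, (some true, some false) => .O
  | .S, (some true, none) => .F1
  | .S, (some false, some true) => .D true none
  | .E, (some true, some false) => .O
  | .E, (some true, none) => .F1
  | .E, (some false, some true) => .D true none
  | .O, (some true, some false) => .E
  | .O, (none, some false) => .F2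
  | .O, (some false, some true) => .D false none
  | .F1, (some false, none) => .AC
  | .F2, (none, some true) => .AC
  | .D p _, (some b, some c) => if b = c then .D (!p) (some b) else .DE
  | _, _ => .DE

def M : DFA Lt St := ⟨stp, .S, {q | q = .AC ∨ ∃ p, q = .D p (some p)}⟩

def SpecB (p : Bool) : Set (List Lt) :=
  {w | ∃ r, (decide (r % 2 = 1) = !p) ∧ w = List.replicate r a10 ++ [aN0, aN1]}
def SpecC (p : Bool) : Set (List Lt) :=
  {w | ∃ r, (decide (r % 2 = 1) = p) ∧ w = List.replicate r a10 ++ [a1N, a0N]}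
def SpecA (p : Bool) : Set (List Lt) :=
  {w | ∃ (r : ℕ) (bs : List Bool), bs.getLast? = some (decide ((cond p 1 0 + r + bs.length) % 2 = 0)) ∧
    w = List.replicate r a10 ++ a01 :: bs.map dg}
def SpecD (p : Bool) (l : Option Bool) : Set (List Lt) :=
  {w | ∃ bs : List Bool, w = bs.map dg ∧
    ((bs = [] ∧ l = some p) ∨ bs.getLast? = some (xor p (decide (bs.length % 2 = 1))))}

def Spec : St → Set (List Lt)
  | .S => {[aN1]} ∪ SpecB false ∪ SpecC false ∪ SpecA false
  | .E => SpecB false ∪ SpecC false ∪ SpecA false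
  | .O => SpecB true ∪ SpecC true ∪ SpecA true
  | .F1 => {[a0N]}
  | .F2 => {[aN1]}
  | .AC => {[]}
  | .DE => ∅
  | .D p l => SpecD p l

lemma evalFrom_cons (q : St) (c : Lt) (w : List Lt) :
    M.evalFrom q (c :: w) = M.evalFrom (stp q c) w := rfl

lemma evalFrom_nil (q : St) : M.evalFrom q [] = q := rfl

-- cons-closure lemmas
lemma consB {w p} (h : w ∈ SpecB p) : a10 :: w ∈ SpecB (!p) := by
  obtain ⟨r, hr, rfl⟩ := h
  refine ⟨r + 1, ?_, by simp [List.replicate_succ]⟩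
  cases p <;> simp_all <;> omega

lemma consC {w p} (h : w ∈ SpecC p) : a10 :: w ∈ SpecC (!p) := by
  obtain ⟨r, hr, rfl⟩ := h
  refine ⟨r + 1, ?_, by simp [List.replicate_succ]⟩
  cases p <;> simp_all <;> omega

lemma consA {w p} (h : w ∈ SpecA p) : a10 :: w ∈ SpecA (!p) := by
  obtain ⟨r, bs, hr, rfl⟩ := h
  refine ⟨r + 1, bs, ?_, by simp [List.replicate_succ]⟩
  rw [hr]
  congr 1
  cases p <;>
    simp only [Bool.not_false, Bool.not_true, Bool.cond_true, Bool.cond_false] <;>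
    exact decide_eq_decide.mpr (by omega)

lemma parEntry (p : Bool) (m : ℕ) :
    xor p (decide (m % 2 = 1)) = decide ((cond (!p) 1 0 + 0 + m) % 2 = 0) := by
  cases p <;> rcases Nat.mod_two_eq_zero_or_one m with h | h <;>
    simp [h, Nat.add_mod]

lemma parFlip (p : Bool) (m n : ℕ) (hn : n = m + 1) :
    some (xor (!p) (decide (m % 2 = 1))) = some (xor p (decide (n % 2 = 1))) := by
  subst hn
  cases p <;> rcases Nat.mod_two_eq_zero_or_one m with h | h <;>
    simp [h, Nat.add_mod]

lemma entryA {w p} (h : w ∈ SpecD p none) : a01 :: w ∈ SpecA (!p) := by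
  obtain ⟨bs, rfl, h⟩ := h
  rcases h with ⟨_, h⟩ | h
  · exact absurd h (by simp)
  · refine ⟨0, bs, ?_, by simp⟩
    rw [h, parEntry]

lemma consD {w p l b} (h : w ∈ SpecD (!p) (some b)) : dg b :: w ∈ SpecD p l := by
  obtain ⟨bs, rfl, h⟩ := h
  refine ⟨b :: bs, by simp, Or.inr ?_⟩
  rcases h with ⟨rfl, hb⟩ | h
  · obtain rfl : b = !p := by simpa using hb
    simp
  · cases bs with
    | nil => simp at h
    | cons c cs =>
      rw [List.getLast?_cons_cons, h]
      exact parFlip p (c :: cs).length (b :: c :: cs).length (by simp)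
-- Soundness: accepted words satisfy the spec
lemma parFlipB (p : Bool) (m n : ℕ) (hn : n = m + 1) :
    xor (!p) (decide (m % 2 = 1)) = xor p (decide (n % 2 = 1)) := by
  subst hn
  cases p <;> rcases Nat.mod_two_eq_zero_or_one m with h | h <;>
    simp [h, Nat.add_mod]

lemma sound : ∀ (w : List Lt) (q : St), M.evalFrom q w ∈ M.accept → w ∈ Spec q := by
  intro w
  induction w with
  | nil =>
    intro q hq
    rcases hq with rfl | ⟨p, rfl⟩
    · exact rfl
    · exact ⟨[], rfl, Or.inl ⟨rfl, rfl⟩⟩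
  | cons c w ih =>
    intro q hq
    have hw := ih (stp q c) hq
    obtain ⟨o1, o2⟩ := c
    cases q <;> rcases o1 with _ | (_ | _) <;> rcases o2 with _ | (_ | _) <;>
      first
        | exact hw.elim
        | (obtain rfl := hw; exact rfl)
        | (obtain rfl := hw; exact Or.inl (Or.inl (Or.inl rfl)))
        | (obtain rfl := hw; exact Or.inl (Or.inr ⟨0, rfl, rfl⟩))
        | (obtain rfl := hw; exact Or.inl (Or.inl ⟨0, rfl, rfl⟩))
        | exact Or.inr (entryA hw)
        | exact consD hw
        | (rcases hw with (hw | hw) | hw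
           · exact Or.inl (Or.inl (consB hw))
           · exact Or.inl (Or.inr (consC hw))
           · exact Or.inr (consA hw))
        | (rcases hw with (hw | hw) | hw
           · exact Or.inl (Or.inl (Or.inr (consB hw)))
           · exact Or.inl (Or.inr (consC hw))
           · exact Or.inr (consA hw))
-- Completeness machinery
lemma stpD (p : Bool) (l : Option Bool) (b : Bool) :
    stp (.D p l) (dg b) = .D (!p) (some b) := by
  show (if b = b then St.D (!p) (some b) else .DE) = _
  rw [if_pos rfl]

lemma evalD (p : Bool) (l : Option Bool) : ∀ bs : List Bool,
    M.evalFrom (.D p l) (bs.map dg) =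
      .D (xor p (decide (bs.length % 2 = 1))) (Option.or bs.getLast? l) := by
  intro bs
  induction bs generalizing p l with
  | nil => simp
  | cons b bs ih =>
    rw [List.map_cons, evalFrom_cons, stpD, ih]
    congr 1
    · exact parFlipB p bs.length (b :: bs).length (by simp)
    · cases bs with
      | nil => simp
      | cons x xs =>
        rw [List.getLast?_cons_cons, List.getLast?_eq_getLast (l := x :: xs) (by simp)]
        rfl

lemma evalRep : ∀ (r : ℕ) (t : List Lt),
    (M.evalFrom .E (List.replicate r a10 ++ t) =
      if r % 2 = 0 then M.evalFrom .E t else M.evalFrom .O t) ∧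
    (M.evalFrom .O (List.replicate r a10 ++ t) =
      if r % 2 = 0 then M.evalFrom .O t else M.evalFrom .E t) := by
  intro r
  induction r with
  | zero => simp
  | succ n ih =>
    intro t
    have h1 : M.evalFrom .E (List.replicate (n+1) a10 ++ t) =
        M.evalFrom .O (List.replicate n a10 ++ t) := by
      rw [List.replicate_succ, List.cons_append, evalFrom_cons]; rfl
    have h2 : M.evalFrom .O (List.replicate (n+1) a10 ++ t) =
        M.evalFrom .E (List.replicate n a10 ++ t) := by
      rw [List.replicate_succ, List.cons_append, evalFrom_cons]; rfl
    rcases Nat.mod_two_eq_zero_or_one n with h | h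
    · refine ⟨?_, ?_⟩
      · rw [h1, (ih t).2, if_pos h, if_neg (by omega)]
      · rw [h2, (ih t).1, if_pos h, if_neg (by omega)]
    · have h' : (n+1) % 2 = 0 := by omega
      refine ⟨?_, ?_⟩
      · rw [h1, (ih t).2, if_neg (by omega), if_pos h']
      · rw [h2, (ih t).1, if_neg (by omega), if_pos h']

lemma evalRepS (r : ℕ) (t : List Lt) :
    M.evalFrom .S (List.replicate r a10 ++ t) =
      if r = 0 then M.evalFrom .S t
      else if r % 2 = 0 then M.evalFrom .E t else M.evalFrom .O t := by
  cases r with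
  | zero => simp
  | succ n =>
    rw [List.replicate_succ, List.cons_append, evalFrom_cons, if_neg (Nat.succ_ne_zero n)]
    have h := (evalRep n t).2
    have : M.evalFrom (stp .S a10) (List.replicate n a10 ++ t) =
        M.evalFrom .O (List.replicate n a10 ++ t) := rfl
    rw [this, h]
    rcases Nat.mod_two_eq_zero_or_one n with h | h <;>
      [ (have h' : (n+1) % 2 = 1 := by omega);
        (have h' : (n+1) % 2 = 0 := by omega)] <;> simp [h, h']
lemma accB {r : ℕ} (hr : r % 2 = 1) :
    (List.replicate r a10 ++ [aN0, aN1]) ∈ M.accepts := by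
  show M.evalFrom .S _ ∈ M.accept
  rw [evalRepS, if_neg (by omega), if_neg (by omega)]
  exact Or.inl rfl

lemma accC {r : ℕ} (hr : r % 2 = 0) :
    (List.replicate r a10 ++ [a1N, a0N]) ∈ M.accepts := by
  show M.evalFrom .S _ ∈ M.accept
  rw [evalRepS]
  rcases Nat.eq_zero_or_pos r with rfl | hp
  · rw [if_pos rfl]; exact Or.inl rfl
  · rw [if_neg (by omega), if_pos hr]; exact Or.inl rfl

lemma accD {bs : List Bool} {v : Bool} (p : Bool) (hbs : bs.getLast? = some v)
    (hv : xor p (decide (bs.length % 2 = 1)) = v) :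
    M.evalFrom (.D p none) (bs.map dg) ∈ M.accept := by
  rw [evalD, hbs, hv]
  exact Or.inr ⟨v, rfl⟩

lemma accA {r : ℕ} {bs : List Bool} {v : Bool} (hbs : bs.getLast? = some v)
    (hv : v = decide ((r + bs.length) % 2 = 0)) :
    (List.replicate r a10 ++ a01 :: bs.map dg) ∈ M.accepts := by
  show M.evalFrom .S _ ∈ M.accept
  rw [evalRepS]
  rcases Nat.eq_zero_or_pos r with rfl | hp
  · rw [if_pos rfl]
    show M.evalFrom (.D true none) (bs.map dg) ∈ M.accept
    refine accD true hbs ?_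
    rw [hv]
    rcases Nat.mod_two_eq_zero_or_one bs.length with h | h <;> simp [h, Nat.add_mod]
  · rcases Nat.mod_two_eq_zero_or_one r with hr | hr
    · rw [if_neg (by omega), if_pos hr]
      show M.evalFrom (.D true none) (bs.map dg) ∈ M.accept
      refine accD true hbs ?_
      rw [hv]
      rcases Nat.mod_two_eq_zero_or_one bs.length with h | h <;> simp [h, Nat.add_mod, hr]
    · rw [if_neg (by omega), if_neg (by omega)]
      show M.evalFrom (.D false none) (bs.map dg) ∈ M.accept
      refine accD false hbs ?_
      rw [hv]
      rcases Nat.mod_two_eq_zero_or_one bs.length with h | h <;> simp [h, Nat.add_mod, hr]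

theorem accepts_eq : M.accepts = Spec .S := by
  apply Set.eq_of_subset_of_subset
  · intro w hw
    exact sound w .S hw
  · rintro w (((hw | ⟨r, hr, rfl⟩) | ⟨r, hr, rfl⟩) | ⟨r, bs, hlast, rfl⟩)
    · obtain rfl := hw
      exact Or.inl rfl
    · exact accB (by simpa using hr)
    · exact accC (by simpa using hr)
    · refine accA hlast ?_
      simp only [Bool.cond_false]
      exact decide_eq_decide.mpr (by omega)
/-! encode / conv machinery -/

lemma encode_len_eq {ξ : ℕ → Bool} {L : ℕ}
    (h : sInf {m : ℕ | ∀ n, m ≤ n → ξ n = base01 n} = L) :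
    encode ξ = List.ofFn (fun i : Fin L => ξ i) := by
  unfold encode
  rw [h]

lemma sInf_agree_succ {ξ : ℕ → Bool} {p : ℕ} (h1 : ξ p ≠ base01 p)
    (h2 : ∀ n, p < n → ξ n = base01 n) :
    sInf {m : ℕ | ∀ n, m ≤ n → ξ n = base01 n} = p + 1 := by
  have hmem : (p+1) ∈ {m : ℕ | ∀ n, m ≤ n → ξ n = base01 n} := fun n hn => h2 n hn
  refine le_antisymm (Nat.sInf_le hmem) ?_
  by_contra hc
  push_neg at hc
  have hin := Nat.sInf_mem (⟨p+1, hmem⟩ : Set.Nonempty {m : ℕ | ∀ n, m ≤ n → ξ n = base01 n})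
  exact h1 (hin p (by omega))

lemma sInf_agree_zero {ξ : ℕ → Bool} (h : ∀ n, ξ n = base01 n) :
    sInf {m : ℕ | ∀ n, m ≤ n → ξ n = base01 n} = 0 :=
  Nat.sInf_eq_zero.mpr (Or.inl fun n _ => h n)

lemma aMap_eq {ξ : ℕ → Bool} {k : ℕ} (hk : ∀ n < k, ξ n = true) (h0 : ξ k = false)
    (n : ℕ) :
    aMap ξ n = if n < k then false else if n = k then true else ξ n := by
  unfold aMap
  rcases lt_trichotomy n k with h | rfl | h
  · rw [if_pos (fun j hj => hk j (hj.trans h)), hk n h, if_pos h]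
    rfl
  · rw [if_pos (fun j hj => hk j hj), h0, if_neg (lt_irrefl _), if_pos rfl]
    rfl
  · rw [if_neg, if_neg (by omega), if_neg (by omega)]
    intro hall
    rw [hall _ h] at h0
    simp at h0

lemma conv_length {α : Type*} (u v : List α) :
    (conv u v).length = max u.length v.length := by simp [conv]

lemma conv_getElem {α : Type*} (u v : List α) (i : ℕ) (h : i < (conv u v).length) :
    (conv u v)[i] = (u[i]?, v[i]?) := by
  simp [conv]

lemma getLast?_ofFn {α : Type*} {m : ℕ} (hm : 1 ≤ m) (f : Fin m → α) :
    (List.ofFn f).getLast? = some (f ⟨m - 1, by omega⟩) := by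
  rw [List.getLast?_eq_getElem?]
  simp [List.getElem?_ofFn, List.ofFnNthVal, Nat.sub_lt (by omega : 0 < m) one_pos]

lemma base01_even {n : ℕ} (h : n % 2 = 0) : base01 n = false := by
  simp [base01]; omega

lemma base01_odd {n : ℕ} (h : n % 2 = 1) : base01 n = true := by
  simp [base01]; omega
lemma convA {ξ : ℕ → Bool} {k m : ℕ} (hm : 1 ≤ m)
    (hk : ∀ n < k, ξ n = true) (h0 : ξ k = false)
    (hmis : ξ (k+m) ≠ base01 (k+m)) (htail : ∀ n, k+m < n → ξ n = base01 n) :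
    conv (encode ξ) (encode (aMap ξ)) =
      List.replicate k a10 ++ a01 :: (List.ofFn (fun i : Fin m => ξ (k+1+i))).map dg := by
  have haη := aMap_eq hk h0
  have hξ : encode ξ = List.ofFn (fun i : Fin (k+m+1) => ξ i) :=
    encode_len_eq (sInf_agree_succ hmis htail)
  have hηmis : aMap ξ (k+m) ≠ base01 (k+m) := by
    rw [haη, if_neg (by omega), if_neg (by omega)]; exact hmis
  have hηtail : ∀ n, k+m < n → aMap ξ n = base01 n := by
    intro n hn; rw [haη, if_neg (by omega), if_neg (by omega)]; exact htail n hn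
  have hη : encode (aMap ξ) = List.ofFn (fun i : Fin (k+m+1) => aMap ξ i) :=
    encode_len_eq (sInf_agree_succ hηmis hηtail)
  rw [hξ, hη]
  apply List.ext_getElem
  · rw [conv_length]; simp; omega
  · intro i h1 h2
    have hi : i < k + m + 1 := by rw [conv_length] at h1; simpa using h1
    rw [conv_getElem _ _ i h1,
      List.getElem?_eq_getElem (by simpa using hi),
      List.getElem?_eq_getElem (by simpa using hi),
      List.getElem_ofFn, List.getElem_ofFn]
    rcases lt_trichotomy i k with hik | rfl | hik
    · rw [List.getElem_append_left (by simpa using hik), List.getElem_replicate]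
      rw [hk i hik, haη i, if_pos hik]
      rfl
    · rw [List.getElem_append_right (by simp), h0, haη, if_neg (lt_irrefl _), if_pos rfl]
      simp [a01]
    · rw [List.getElem_append_right (by simp; omega)]
      obtain ⟨j, hj⟩ : ∃ j, i - (List.replicate k a10).length = j + 1 :=
        ⟨i - k - 1, by simp; omega⟩
      simp only [hj, List.getElem_cons_succ, List.getElem_map, List.getElem_ofFn]
      rw [haη i, if_neg (by omega), if_neg (by omega)]
      show (some (ξ i), some (ξ i)) = dg (ξ (k+1+j))
      rw [show k+1+j = i by simp at hj; omega]
      rfl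
lemma convB {ξ : ℕ → Bool} {k : ℕ} (hk2 : 2 ≤ k) (hke : k % 2 = 0)
    (hk : ∀ n < k, ξ n = true) (htail : ∀ n, k ≤ n → ξ n = base01 n) :
    conv (encode ξ) (encode (aMap ξ)) = List.replicate (k-1) a10 ++ [aN0, aN1] := by
  have h0 : ξ k = false := by rw [htail k le_rfl]; exact base01_even hke
  have haη := aMap_eq hk h0
  have hξ : encode ξ = List.ofFn (fun i : Fin (k-2+1) => ξ i) := by
    refine encode_len_eq (sInf_agree_succ ?_ ?_)
    · rw [hk _ (by omega), base01_even (by omega)]; simp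
    · intro n hn
      rcases lt_or_ge n k with h | h
      · rw [hk n h, base01_odd (by omega)]
      · exact htail n h
  have hη : encode (aMap ξ) = List.ofFn (fun i : Fin (k+1) => aMap ξ i) := by
    refine encode_len_eq (sInf_agree_succ ?_ ?_)
    · rw [haη, if_neg (lt_irrefl _), if_pos rfl, base01_even hke]; simp
    · intro n hn
      rw [haη, if_neg (by omega), if_neg (by omega)]
      exact htail n (by omega)
  rw [hξ, hη]
  apply List.ext_getElem
  · rw [conv_length]; simp; omega
  · intro i h1 h2
    have hi : i < k + 1 := by rw [conv_length] at h1; simp at h1; omega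
    rw [conv_getElem _ _ i h1]
    rcases lt_trichotomy i (k-1) with hik | hik | hik
    · rw [List.getElem?_eq_getElem (by simp; omega),
        List.getElem?_eq_getElem (by simp; omega),
        List.getElem_ofFn, List.getElem_ofFn, hk i (by omega), haη i, if_pos (by omega)]
      rw [List.getElem_append_left (by simp; omega), List.getElem_replicate]
      rfl
    · rw [List.getElem?_eq_none (by simp; omega),
        List.getElem?_eq_getElem (by simp; omega),
        List.getElem_ofFn, haη i, if_pos (by omega)]
      rw [List.getElem_append_right (by simp; omega)]
      have h3 : i - (List.replicate (k-1) a10).length = 0 := by simp; omega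
      simp only [h3, List.getElem_cons_zero]
      rfl
    · have hik' : i = k := by omega
      rw [List.getElem?_eq_none (by simp; omega),
        List.getElem?_eq_getElem (by simp; omega),
        List.getElem_ofFn, haη i, if_neg (by omega), if_pos hik']
      rw [List.getElem_append_right (by simp; omega)]
      have h3 : i - (List.replicate (k-1) a10).length = 1 := by simp; omega
      simp only [h3, List.getElem_cons_succ, List.getElem_cons_zero]
      rfl

lemma convC {ξ : ℕ → Bool} {k : ℕ} (hko : k % 2 = 1)
    (hk : ∀ n < k, ξ n = true) (h0 : ξ k = false) (htail : ∀ n, k < n → ξ n = base01 n) :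
    conv (encode ξ) (encode (aMap ξ)) = List.replicate (k-1) a10 ++ [a1N, a0N] := by
  have haη := aMap_eq hk h0
  have hξ : encode ξ = List.ofFn (fun i : Fin (k+1) => ξ i) := by
    refine encode_len_eq (sInf_agree_succ ?_ ?_)
    · rw [h0, base01_odd hko]; simp
    · exact htail
  have hη : encode (aMap ξ) = List.ofFn (fun i : Fin (k-1) => aMap ξ i) := by
    rcases eq_or_lt_of_le (show 1 ≤ k by omega) with h1 | h3
    · have := encode_len_eq (ξ := aMap ξ) (sInf_agree_zero ?_)
      · rw [this, ← h1]
      · intro n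
        rcases Nat.lt_or_ge n k with h | h
        · rw [haη n, if_pos h, base01_even (by omega)]
        · rcases eq_or_lt_of_le h with rfl | h'
          · rw [haη, if_neg (lt_irrefl _), if_pos rfl, base01_odd hko]
          · rw [haη, if_neg (by omega), if_neg (by omega)]
            exact htail n h'
    · have key := encode_len_eq (ξ := aMap ξ) (sInf_agree_succ (p := k-2) ?_ ?_)
      · rw [key, show k-2+1 = k-1 by omega]
      · rw [haη, if_pos (by omega), base01_odd (by omega)]; simp
      · intro n hn
        rcases Nat.lt_or_ge n k with h | h
        · rw [haη n, if_pos h, base01_even (by omega)]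
        · rcases eq_or_lt_of_le h with rfl | h'
          · rw [haη, if_neg (lt_irrefl _), if_pos rfl, base01_odd hko]
          · rw [haη, if_neg (by omega), if_neg (by omega)]
            exact htail n h'
  rw [hξ, hη]
  apply List.ext_getElem
  · rw [conv_length]; simp; omega
  · intro i h1 h2
    have hi : i < k + 1 := by rw [conv_length] at h1; simp at h1; omega
    rw [conv_getElem _ _ i h1]
    rcases lt_trichotomy i (k-1) with hik | hik | hik
    · rw [List.getElem?_eq_getElem (by simp; omega),
        List.getElem?_eq_getElem (by simp; omega),
        List.getElem_ofFn, List.getElem_ofFn, hk i (by omega), haη i, if_pos (by omega)]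
      rw [List.getElem_append_left (by simp; omega), List.getElem_replicate]
      rfl
    · rw [List.getElem?_eq_getElem (by simp; omega),
        List.getElem?_eq_none (by simp; omega),
        List.getElem_ofFn, hk i (by omega)]
      rw [List.getElem_append_right (by simp; omega)]
      have h3 : i - (List.replicate (k-1) a10).length = 0 := by simp; omega
      simp only [h3, List.getElem_cons_zero]
      rfl
    · have hik' : i = k := by omega
      have h0' : ξ i = false := by rw [hik']; exact h0
      rw [List.getElem?_eq_getElem (by simp; omega),
        List.getElem?_eq_none (by simp; omega),
        List.getElem_ofFn, h0']
      rw [List.getElem_append_right (by simp; omega)]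
      have h3 : i - (List.replicate (k-1) a10).length = 1 := by simp; omega
      simp only [h3, List.getElem_cons_succ, List.getElem_cons_zero]
      rfl

lemma conv0 {ξ : ℕ → Bool} (h : ∀ n, ξ n = base01 n) :
    conv (encode ξ) (encode (aMap ξ)) = [aN1] := by
  have h0 : ξ 0 = false := by rw [h 0]; exact base01_even (by omega)
  have haη := aMap_eq (k := 0) (fun n hn => absurd hn (Nat.not_lt_zero n)) h0
  have hξ : encode ξ = List.ofFn (fun i : Fin 0 => ξ i) := encode_len_eq (sInf_agree_zero h)
  have hη : encode (aMap ξ) = List.ofFn (fun i : Fin 1 => aMap ξ i) := by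
    refine encode_len_eq (sInf_agree_succ ?_ ?_)
    · rw [haη, if_neg (lt_irrefl _), if_pos rfl, base01_even (by omega)]; simp
    · intro n hn
      rw [haη, if_neg (by omega), if_neg (by omega)]
      exact h n
  rw [hξ, hη]
  apply List.ext_getElem
  · rw [conv_length]; simp
  · intro i h1 h2
    have hi : i = 0 := by rw [conv_length] at h1; simp at h1; omega
    subst hi
    rw [conv_getElem _ _ 0 h1,
      List.getElem?_eq_none (by simp),
      List.getElem?_eq_getElem (by simp),
      List.getElem_ofFn, haη, if_neg (lt_irrefl _), if_pos rfl]
    rfl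
def mkA (r : ℕ) (bs : List Bool) : ℕ → Bool := fun n =>
  if n < r then true else if n = r then false
  else if n - r - 1 < bs.length then bs.getD (n - r - 1) false else base01 n

lemma toSpec {ξ : ℕ → Bool} (hc : Cofinal ξ base01) :
    conv (encode ξ) (encode (aMap ξ)) ∈ Spec .S := by
  obtain ⟨N, hN⟩ := hc
  have hex : ∃ n, ξ n = false := by
    refine ⟨2*N, ?_⟩
    rw [hN (2*N) (by omega)]
    exact base01_even (by omega)
  set k := Nat.find hex with hkdef
  have h0 : ξ k = false := Nat.find_spec hex
  have hk : ∀ n < k, ξ n = true := by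
    intro n hn
    have := Nat.find_min hex hn
    revert this
    cases ξ n <;> simp
  by_cases hmis : ∃ n, k < n ∧ ξ n ≠ base01 n
  · -- family A
    obtain ⟨n0, hn0k, hn0⟩ := hmis
    have hbnd : ∀ n, ξ n ≠ base01 n → n < N := by
      intro n hp
      by_contra hcon
      exact hp (hN n (by omega))
    obtain ⟨T, hTspec, hTmax, hTge⟩ :
        ∃ T, (ξ T ≠ base01 T) ∧ (∀ n, T < n → ξ n = base01 n) ∧ n0 ≤ T := by
      refine ⟨Nat.findGreatest (fun n => ξ n ≠ base01 n) N, ?_, ?_, ?_⟩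
      · exact Nat.findGreatest_spec (P := fun n => ξ n ≠ base01 n)
          (le_of_lt (hbnd n0 hn0)) hn0
      · intro n hn
        by_contra hne
        exact Nat.findGreatest_is_greatest (P := fun n => ξ n ≠ base01 n) hn
          (le_of_lt (hbnd n hne)) hne
      · exact Nat.le_findGreatest (le_of_lt (hbnd n0 hn0)) hn0
    have hTk : k < T := lt_of_lt_of_le hn0k hTge
    have hm1 : 1 ≤ T - k := by omega
    have hkm : k + (T - k) = T := by omega
    rw [convA hm1 hk h0 (by rw [hkm]; exact hTspec) (by rw [hkm]; exact hTmax)]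
    refine Or.inr ⟨k, List.ofFn (fun i : Fin (T-k) => ξ (k+1+i)), ?_, rfl⟩
    rw [getLast?_ofFn hm1]
    simp only [List.length_ofFn, Bool.cond_false]
    congr 1
    have hval : ξ (k + 1 + (T - k - 1)) = ξ T := by rw [show k+1+(T-k-1) = T by omega]
    rw [hval]
    have : ξ T = !(base01 T) := by
      revert hTspec
      cases ξ T <;> cases base01 T <;> simp
    rw [this]
    unfold base01
    rcases Nat.mod_two_eq_zero_or_one T with h | h <;>
      · rw [show 0 + k + (T - k) = T by omega]
        simp [h]
  · -- no mismatch after k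
    push_neg at hmis
    rcases Nat.eq_zero_or_pos k with hzero | hkpos
    · have hall : ∀ n, ξ n = base01 n := by
        intro n
        rcases Nat.eq_zero_or_pos n with rfl | h
        · rw [show (0:ℕ) = k from hzero.symm, h0]
          exact (base01_even (by omega)).symm
        · exact hmis n (by omega)
      rw [conv0 hall]
      exact Or.inl (Or.inl (Or.inl rfl))
    · rcases Nat.mod_two_eq_zero_or_one k with hke | hko
      · have htail : ∀ n, k ≤ n → ξ n = base01 n := by
          intro n hn
          rcases eq_or_lt_of_le hn with rfl | h
          · rw [h0]; exact (base01_even hke).symm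
          · exact hmis n h
        rw [convB (by omega) hke hk htail]
        exact Or.inl (Or.inl (Or.inr ⟨k-1, by rw [decide_eq_true (by omega : (k-1) % 2 = 1)]; rfl, rfl⟩))
      · rw [convC hko hk h0 hmis]
        exact Or.inl (Or.inr ⟨k-1, by rw [decide_eq_false (by omega : ¬ (k-1) % 2 = 1)], rfl⟩)

lemma fromSpec {w : List Lt} (hw : w ∈ Spec .S) :
    ∃ ξ : ℕ → Bool, Cofinal ξ base01 ∧ conv (encode ξ) (encode (aMap ξ)) = w := by
  rcases hw with (((hw | ⟨r, hr, rfl⟩) | ⟨r, hr, rfl⟩) | ⟨r, bs, hlast, rfl⟩)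
  · obtain rfl := hw
    exact ⟨base01, ⟨0, fun n _ => rfl⟩, conv0 fun n => rfl⟩
  · -- SpecB false : r odd, k := r + 1 even ≥ 2
    have hr' : r % 2 = 1 := by simpa using hr
    refine ⟨fun n => if n < r + 1 then true else base01 n, ⟨r + 1, fun n hn => if_neg (by omega)⟩, ?_⟩
    rw [convB (k := r + 1) (by omega) (by omega) (fun n hn => if_pos hn)
      (fun n hn => if_neg (by omega))]
    simp
  · -- SpecC false : r even, k := r + 1 odd
    have hr' : r % 2 = 0 := by simpa using hr
    refine ⟨fun n => if n < r + 1 then true else if n = r + 1 then false else base01 n,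
      ⟨r + 2, fun n hn => by
        show (if n < r + 1 then true else if n = r + 1 then false else base01 n) = base01 n
        rw [if_neg (by omega), if_neg (by omega)]⟩, ?_⟩
    rw [convC (k := r + 1) (by omega) (fun n hn => if_pos hn)
      (by rw [if_neg (by omega), if_pos rfl])
      (fun n hn => by rw [if_neg (by omega), if_neg (by omega)])]
    simp
  · -- SpecA false
    have hbsne : bs ≠ [] := by
      intro h
      rw [h] at hlast
      simp at hlast
    have hm1 : 1 ≤ bs.length := List.length_pos_iff.mpr hbsne
    have hlast' : bs.getD (bs.length - 1) false =
        decide ((cond false 1 0 + r + bs.length) % 2 = 0) := by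
      rw [List.getD_eq_getElem?_getD, ← List.getLast?_eq_getElem?, hlast]
      rfl
    have hmis : mkA r bs (r + bs.length) ≠ base01 (r + bs.length) := by
      unfold mkA
      rw [if_neg (by omega), if_neg (by omega), if_pos (by omega),
        show r + bs.length - r - 1 = bs.length - 1 by omega, hlast']
      simp only [Bool.cond_false]
      unfold base01
      rcases Nat.mod_two_eq_zero_or_one (r + bs.length) with h | h <;>
        simp [h]
    have htail : ∀ n, r + bs.length < n → mkA r bs n = base01 n := by
      intro n hn
      unfold mkA
      rw [if_neg (by omega), if_neg (by omega), if_neg (by omega)]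
    refine ⟨mkA r bs, ⟨r + bs.length + 1, fun n hn => htail n (by omega)⟩, ?_⟩
    have hk : ∀ n < r, mkA r bs n = true := fun n hn => if_pos hn
    have h0 : mkA r bs r = false := by
      unfold mkA
      rw [if_neg (lt_irrefl r), if_pos rfl]
    rw [convA (ξ := mkA r bs) (k := r) (m := bs.length) hm1 hk h0 hmis htail]
    congr 2
    apply List.ext_getElem
    · simp
    · intro i hi1 hi2
      simp only [List.length_map, List.length_ofFn] at hi1
      have hi2' : i < bs.length := by simpa using hi2
      rw [List.getElem_map, List.getElem_map, List.getElem_ofFn]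
      congr 1
      unfold mkA
      rw [if_neg (by omega), if_neg (by omega), if_pos (by omega),
        show r + 1 + i - r - 1 = i by omega, List.getD_eq_getElem?_getD,
        List.getElem?_eq_getElem hi2']
      rfl

theorem Ea_isRegular :
    Language.IsRegular
      {p : List (Option Bool × Option Bool) |
        ∃ ξ : ℕ → Bool, Cofinal ξ base01 ∧ conv (encode ξ) (encode (aMap ξ)) = p} := by
  refine ⟨St, inferInstance, M, ?_⟩
  rw [accepts_eq]
  ext w
  constructor
  · exact fun hw => fromSpec hw
  · rintro ⟨ξ, hc, rfl⟩
    exact toSpec hc
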